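/- Let v be an interior node with communication wheel W having rim nodes v₁, ..., v_m. If u is a neighbor of v (0 < d(u,v) ≤ r) and u is not a rim node of W, then u is adjacent to some rim node of W, i.e., d(u, v_i) ≤ r for some i. -/

import Mathlib

open Metric

noncomputable section

/-- Points of the plane. -/
abbrev Pt := EuclideanSpace ℝ (Fin 2)

/-- `Zd r p` : the closed disk (communication zone) of radius `r` centered at `p`. -/
def Zd (r : ℝ) (p : Pt) : Set Pt := Metric.closedBall p r

/-- `Zb r p` : the boundary circle of the communication zone of `p`. -/
def Zb (r : ℝ) (p : Pt) : Set Pt := Metric.sphere p r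

/-- The arc-containment relation `a ⪯_v b`. -/
def arcLe (r : ℝ) (v a b : Pt) : Prop := Zd r a ∩ Zb r v ⊆ Zd r b ∩ Zb r v

/-- `u` is a neighbor of `v`. -/
def Nbr (r : ℝ) (v u : Pt) : Prop := u ≠ v ∧ dist u v ≤ r

/-- General position: no three distinct points of `V` are collinear. -/
def GenPos (V : Set Pt) : Prop :=
  ∀ a ∈ V, ∀ b ∈ V, ∀ c ∈ V, a ≠ b → a ≠ c → b ≠ c → ¬ Collinear ℝ ({a, b, c} : Set Pt)

/-- `u` is a maximal neighbor of `v` within `V`. -/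
def MaxNbr (V : Set Pt) (r : ℝ) (v u : Pt) : Prop :=
  u ∈ V ∧ Nbr r v u ∧ ∀ u' ∈ V, u' ≠ u → Nbr r v u' → ¬ arcLe r v u u'

/-- `v` is an interior node of `V`. -/
def IsInterior (V : Set Pt) (r : ℝ) (v : Pt) : Prop :=
  ∀ z ∈ Zb r v, ∃ v' ∈ V, v' ≠ v ∧ z ∈ Zd r v'

/-- Counterclockwise rotation by `π/2`. -/
def rot90 (x : Pt) : Pt := (WithLp.equiv 2 (Fin 2 → ℝ)).symm ![-(x 1), x 0]

/-- The boundary intersection `CCW(v, v')` of the circles `∂Z(v)` and `∂Z(v')`: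
traversing from `CCW(v,v')` to `CW(v,v')` clockwise along `∂Z(v)` sweeps an angle `< π`. -/
def ccwPt (r : ℝ) (v v' : Pt) : Pt :=
  midpoint ℝ v v' + (Real.sqrt (r ^ 2 - (dist v v' / 2) ^ 2) / dist v v') • rot90 (v' - v)

/-- The boundary intersection `CW(v, v')`. -/
def cwPt (r : ℝ) (v v' : Pt) : Pt :=
  midpoint ℝ v v' - (Real.sqrt (r ^ 2 - (dist v v' / 2) ^ 2) / dist v v') • rot90 (v' - v)

/-- A communication wheel of `v` with `m` rim nodes `w 0, …, w (m-1)` (indices mod `m`). -/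
def IsCommWheel (V : Set Pt) (r : ℝ) (v : Pt) (m : ℕ) (w : ZMod m → Pt) : Prop :=
  3 ≤ m ∧ Function.Injective w ∧
  (∀ i, MaxNbr V r v (w i)) ∧
  (∀ i, dist (w i) (w (i + 1)) ≤ r) ∧
  (∀ i, ccwPt r v (w i) ∈ Zd r (w (i + 1)) ∧ cwPt r v (w i) ∈ Zd r (w (i - 1)))

/-! ### Auxiliary material -/

namespace Stmt10Aux

open Real

def toC (p : Pt) : ℂ := ⟨p 0, p 1⟩

lemma dist_toC (p q : Pt) : dist p q = ‖toC p - toC q‖ := by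
  rw [EuclideanSpace.dist_eq, Complex.norm_def, Complex.normSq_apply]
  simp only [toC, Fin.sum_univ_two, Real.dist_eq, sq_abs, Complex.sub_re, Complex.sub_im]
  congr 1
  ring

lemma toC_line (v u : Pt) (s : ℝ) : toC (v + s • (u - v)) - toC v = s * (toC u - toC v) := by
  simp [toC, Complex.ext_iff]

lemma toC_ccw (r : ℝ) (v p : Pt) :
    toC (ccwPt r v p) - toC v
      = (toC p - toC v) * ⟨1/2, Real.sqrt (r ^ 2 - (dist v p / 2) ^ 2) / dist v p⟩ := by
  simp only [ccwPt, rot90, toC, Complex.ext_iff, midpoint_eq_smul_add, Complex.mul_re,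
    Complex.mul_im, Complex.sub_re, Complex.sub_im, Complex.add_re, Complex.add_im,
    PiLp.add_apply, PiLp.smul_apply, PiLp.sub_apply, WithLp.equiv_symm_apply, PiLp.toLp_apply,
    Matrix.cons_val_zero, Matrix.cons_val_one, Matrix.head_cons, smul_eq_mul, invOf_eq_inv]
  constructor <;> ring

lemma toC_cw (r : ℝ) (v p : Pt) :
    toC (cwPt r v p) - toC v
      = (toC p - toC v) * ⟨1/2, -(Real.sqrt (r ^ 2 - (dist v p / 2) ^ 2) / dist v p)⟩ := by
  simp only [cwPt, rot90, toC, Complex.ext_iff, midpoint_eq_smul_add, Complex.mul_re,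
    Complex.mul_im, Complex.sub_re, Complex.sub_im, Complex.add_re, Complex.add_im,
    PiLp.add_apply, PiLp.smul_apply, PiLp.sub_apply, WithLp.equiv_symm_apply, PiLp.toLp_apply,
    Matrix.cons_val_zero, Matrix.cons_val_one, Matrix.head_cons, smul_eq_mul, invOf_eq_inv]
  constructor <;> ring

lemma absSq_polar (R D ξ γ : ℝ) :
    ‖(R : ℂ) * Complex.exp (ξ * Complex.I) - (D : ℂ) * Complex.exp (γ * Complex.I)‖ ^ 2
      = R^2 + D^2 - 2*R*D*Real.cos (ξ - γ) := by
  rw [Complex.sq_norm, Complex.normSq_apply]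
  simp [Complex.exp_mul_I, Complex.mul_re, Complex.mul_im, Complex.add_re, Complex.add_im,
    Real.cos_sub, Complex.cos_ofReal_re, Complex.sin_ofReal_re]
  nlinarith [Real.sin_sq_add_cos_sq ξ, Real.sin_sq_add_cos_sq γ]

lemma Tpolar (d r : ℝ) (hd : 0 < d) (hdr : d ≤ r) (hr : 0 < r) :
    (⟨1/2, Real.sqrt (r ^ 2 - (d/2) ^ 2) / d⟩ : ℂ)
      = ((r/d : ℝ) : ℂ) * Complex.exp ((Real.arccos (d/(2*r))) * Complex.I) := by
  have h1 : (d/(2*r)) ≤ 1 := by rw [div_le_one (by linarith)]; linarith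
  have h0 : (0:ℝ) ≤ d/(2*r) := by positivity
  have key : r * Real.sqrt (1 - (d/(2*r))^2) = Real.sqrt (r^2 - (d/2)^2) := by
    have h2 : r^2 - (d/2)^2 = r^2 * (1 - (d/(2*r))^2) := by field_simp
    rw [h2, Real.sqrt_mul (sq_nonneg r), Real.sqrt_sq hr.le]
  rw [Complex.exp_mul_I, Complex.ext_iff]
  simp only [Complex.mul_re, Complex.mul_im, Complex.add_re, Complex.add_im,
    Complex.ofReal_re, Complex.ofReal_im, Complex.I_re, Complex.I_im,
    Complex.cos_ofReal_re, Complex.sin_ofReal_re, Complex.cos_ofReal_im, Complex.sin_ofReal_im,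
    Real.cos_arccos (by linarith) h1, Real.sin_arccos]
  constructor
  · field_simp; ring
  · rw [← key]; ring

lemma Tpolar_neg (d r : ℝ) (hd : 0 < d) (hdr : d ≤ r) (hr : 0 < r) :
    (⟨1/2, -(Real.sqrt (r ^ 2 - (d/2) ^ 2) / d)⟩ : ℂ)
      = ((r/d : ℝ) : ℂ) * Complex.exp ((-(Real.arccos (d/(2*r)))) * Complex.I) := by
  have h1 : (d/(2*r)) ≤ 1 := by rw [div_le_one (by linarith)]; linarith
  have h0 : (0:ℝ) ≤ d/(2*r) := by positivity
  have key : r * Real.sqrt (1 - (d/(2*r))^2) = Real.sqrt (r^2 - (d/2)^2) := by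
    have h2 : r^2 - (d/2)^2 = r^2 * (1 - (d/(2*r))^2) := by field_simp
    rw [h2, Real.sqrt_mul (sq_nonneg r), Real.sqrt_sq hr.le]
  rw [Complex.exp_mul_I, Complex.ext_iff]
  simp only [Complex.mul_re, Complex.mul_im, Complex.add_re, Complex.add_im,
    Complex.ofReal_re, Complex.ofReal_im, Complex.I_re, Complex.I_im, Complex.neg_re,
    Complex.neg_im, Complex.cos_ofReal_re, Complex.sin_ofReal_re, Complex.cos_ofReal_im,
    Complex.sin_ofReal_im, Complex.cos_neg, Complex.sin_neg, Real.cos_neg, Real.sin_neg,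
    Real.cos_arccos (by linarith) h1, Real.sin_arccos]
  constructor
  · field_simp; ring
  · rw [← key]; ring

lemma cos_window (γ α : ℝ) (hγ0 : 0 ≤ γ) (hγ2 : γ ≤ 2*π) (hα0 : 0 < α) (hα1 : α < π/2)
    (h : Real.cos γ < Real.cos α) : α < γ ∧ γ < 2*π - α := by
  have hπ := Real.pi_pos
  by_cases hcase : γ ≤ π
  · have h1 : α < γ := by
      by_contra hle
      push_neg at hle
      have := Real.cos_le_cos_of_nonneg_of_le_pi hγ0 (by linarith) hle
      linarith
    exact ⟨h1, by linarith⟩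
  · push_neg at hcase
    have hcg : Real.cos (2*π - γ) = Real.cos γ := by
      rw [Real.cos_sub]; simp [Real.cos_two_pi, Real.sin_two_pi]
    have h1 : α < 2*π - γ := by
      by_contra hle
      push_neg at hle
      have := Real.cos_le_cos_of_nonneg_of_le_pi (by linarith) (by linarith) hle
      linarith
    exact ⟨by linarith, by linarith⟩

lemma cos_narrow (θ α : ℝ) (hα0 : 0 < α) (hα1 : α < π/2)
    (hlb : -(2*π - α) < θ) (hub : θ < 2*π - α) (h : Real.cos α ≤ Real.cos θ) :
    -α ≤ θ ∧ θ ≤ α := by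
  have hπ := Real.pi_pos
  have key : ∀ x : ℝ, 0 ≤ x → x < 2*π - α → Real.cos α ≤ Real.cos x → x ≤ α := by
    intro x hx0 hxu hcos
    by_contra hgt
    push_neg at hgt
    by_cases hc : x ≤ π
    · have := Real.cos_lt_cos_of_nonneg_of_le_pi (by linarith) hc hgt
      linarith
    · push_neg at hc
      have hcg : Real.cos (2*π - x) = Real.cos x := by
        rw [Real.cos_sub]; simp [Real.cos_two_pi, Real.sin_two_pi]
      have := Real.cos_lt_cos_of_nonneg_of_le_pi hα0.le
        (by linarith : 2*π - x ≤ π) (by linarith : α < 2*π - x)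
      linarith
  rcases le_or_gt 0 θ with h0 | h0
  · exact ⟨by linarith [key θ h0 hub h], key θ h0 hub h⟩
  · have := key (-θ) (by linarith) (by linarith) (by rwa [Real.cos_neg])
    exact ⟨by linarith, by linarith⟩

lemma zmod_cyclic_mono {m : ℕ} (hm : 3 ≤ m) (g : ZMod m → ℝ) (h : ∀ i, g i ≤ g (i+1)) :
    ∀ i, g i = g (i+1) := by
  haveI : NeZero m := ⟨by omega⟩
  have key : ∀ (k : ℕ) (i : ZMod m), g i ≤ g (i + k) := by
    intro k
    induction k with
    | zero => simp
    | succ n ih =>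
      intro i
      calc g i ≤ g (i + n) := ih i
        _ ≤ g (i + n + 1) := h _
        _ = g (i + (n+1 : ℕ)) := by push_cast; ring_nf
  intro i
  have h1 : g (i+1) ≤ g (i + 1 + ((m - 1 : ℕ) : ZMod m)) := key (m-1) (i+1)
  have h2 : (i + 1 + ((m - 1 : ℕ) : ZMod m)) = i := by
    have h3 : ((m - 1 : ℕ) : ZMod m) = (m : ZMod m) - 1 := by
      have h4 : (m - 1) + 1 = m := by omega
      calc ((m - 1 : ℕ) : ZMod m) = (((m-1) + 1 : ℕ) : ZMod m) - 1 := by push_cast; ring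
        _ = (m : ZMod m) - 1 := by rw [h4]
    rw [h3, ZMod.natCast_self]; ring
  rw [h2] at h1
  exact le_antisymm (h i) h1

lemma near_lemma (r d : ℝ) (hr : 0 < r) (hd0 : 0 < d) (hdr : d ≤ r) (Q : ℂ)
    (hQ : ‖Q‖ ≤ r) (h : ‖(r:ℂ) - Q‖ ≤ r) :
    ‖(d:ℂ) - Q‖ ≤ r := by
  have h1 : Complex.normSq ((r:ℂ) - Q) ≤ r^2 := by
    rw [← Complex.sq_norm]; nlinarith [norm_nonneg ((r:ℂ) - Q)]
  have h2 : Complex.normSq Q ≤ r^2 := by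
    rw [← Complex.sq_norm]; nlinarith [norm_nonneg Q]
  have h3 : Complex.normSq ((d:ℂ) - Q) ≤ r^2 := by
    simp only [Complex.normSq_sub, Complex.normSq_ofReal, Complex.mul_re, Complex.ofReal_re,
      Complex.ofReal_im] at h1 ⊢
    set Re := ((starRingEnd ℂ) Q).re
    set N := Complex.normSq Q
    have h5 : N ≤ 2*r*Re := by nlinarith
    nlinarith [mul_nonneg (sub_nonneg.2 hdr) (sub_nonneg.2 h2),
      mul_nonneg hd0.le (sub_nonneg.2 h5), mul_pos hd0 hr]
  have h4 : ‖(d:ℂ) - Q‖ ^ 2 ≤ r^2 := by rwa [Complex.sq_norm]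
  nlinarith [norm_nonneg ((d:ℂ) - Q)]

end Stmt10Aux

open Stmt10Aux in
/-- Lemma: every neighbor of `v` is a rim node or adjacent to a rim node. -/
theorem stmt_10 (V : Set Pt) (hV : V.Finite) (hgp : GenPos V) (r : ℝ) (hr : 0 < r)
    (v : Pt) (hv : v ∈ V) (hint : IsInterior V r v)
    (m : ℕ) (w : ZMod m → Pt) (hw : IsCommWheel V r v m w)
    (u : Pt) (hu : u ∈ V) (hnbr : Nbr r v u) (hnotrim : ∀ i, w i ≠ u) :
    ∃ i, dist u (w i) ≤ r := by
  classical
  obtain ⟨hm, hinj, hmax, hadj, hwheel⟩ := hw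
  by_contra hcon
  push_neg at hcon
  -- basic data
  have hd0 : 0 < dist u v := dist_pos.2 hnbr.1
  set d : ℝ := dist u v with hd_def
  have hdr : d ≤ r := hnbr.2
  set cz : ℂ := ((r/d : ℝ) : ℂ) * (toC u - toC v) with hcz_def
  have habs_cu : ‖toC u - toC v‖ = d := (dist_toC u v).symm
  have habs_cz : ‖cz‖ = r := by
    rw [hcz_def, norm_mul, Complex.norm_real, Real.norm_eq_abs, habs_cu, abs_of_pos (by positivity)]
    field_simp
  set F : Pt → ℂ := fun p => (toC p - toC v) * (starRingEnd ℂ) cz / r with hF_def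
  have hFdist : ∀ p q : Pt, ‖F p - F q‖ = dist p q := by
    intro p q
    have : F p - F q = (toC p - toC q) * (starRingEnd ℂ) cz / r := by
      rw [hF_def]; ring
    rw [this, norm_div, norm_mul, Complex.norm_conj, habs_cz, Complex.norm_real, Real.norm_eq_abs,
      abs_of_pos hr, mul_div_assoc, div_self hr.ne', mul_one, dist_toC]
  have hFv : F v = 0 := by simp [hF_def]
  have hFu : F u = (d : ℂ) := by
    rw [hF_def]
    simp only [hcz_def, map_mul, Complex.conj_ofReal]
    have hcc : (starRingEnd ℂ) (toC u - toC v) * (toC u - toC v) = ((d^2 : ℝ) : ℂ) := by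
      rw [mul_comm, Complex.mul_conj, Complex.normSq_eq_norm_sq, habs_cu]
    rw [mul_comm ((toC u - toC v)) _, mul_assoc, hcc]
    have hdne : (d:ℂ) ≠ 0 := by exact_mod_cast hd0.ne'
    have hrne : (r:ℂ) ≠ 0 := by exact_mod_cast hr.ne'
    push_cast
    field_simp
  -- per-index data
  set dd : ZMod m → ℝ := fun i => dist v (w i) with hdd_def
  have hdd0 : ∀ i, 0 < dd i := fun i => dist_pos.2 (Ne.symm (hmax i).2.1.1)
  have hddr : ∀ i, dd i ≤ r := fun i => by
    have h := (hmax i).2.1.2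
    rw [dist_comm] at h
    exact h
  set q : ZMod m → ℂ := fun i => F (w i) with hq_def
  have habsq : ∀ i, ‖q i‖ = dd i := by
    intro i
    have h := hFdist (w i) v
    rw [hFv, sub_zero] at h
    simpa [hq_def, hdd_def, dist_comm] using h
  set α : ZMod m → ℝ := fun i => Real.arccos (dd i / (2*r)) with hα_def
  have hαcos : ∀ i, Real.cos (α i) = dd i / (2*r) :=
    fun i => Real.cos_arccos
      (le_trans (by norm_num) (by positivity : (0:ℝ) ≤ dd i / (2*r))) (by
      rw [div_le_one (by linarith)]; linarith [hddr i, hdd0 i])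
  have hα_eq : ∀ i, α i = Real.arccos (dd i / (2*r)) := fun i => rfl
  have hdd_eq : ∀ i, dd i = dist v (w i) := fun i => rfl
  have hq_eq : ∀ i, q i = F (w i) := fun i => rfl
  have h2r : (0:ℝ) < 2*r := by linarith
  have hα0 : ∀ i, 0 < α i := fun i => Real.arccos_pos.2 (by
    rw [div_lt_one h2r]; linarith [hddr i, hdd0 i])
  have hα1 : ∀ i, α i < Real.pi/2 := fun i => Real.arccos_lt_pi_div_two.2 (by
    have := hdd0 i; positivity)
  set γ : ZMod m → ℝ := fun i =>
    if Complex.arg (q i) < 0 then Complex.arg (q i) + 2*Real.pi else Complex.arg (q i)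
    with hγ_def
  have hγ_eq : ∀ i, γ i = if Complex.arg (q i) < 0 then Complex.arg (q i) + 2*Real.pi
      else Complex.arg (q i) := fun i => rfl
  have hπ := Real.pi_pos
  have hγmem : ∀ i, 0 ≤ γ i ∧ γ i ≤ 2*Real.pi := by
    intro i
    have h1 := Complex.arg_le_pi (q i)
    have h2 := Complex.neg_pi_lt_arg (q i)
    rw [hγ_eq]
    split_ifs with h
    · constructor <;> linarith
    · push_neg at h
      constructor <;> linarith
  have hqpolar : ∀ i, q i = ((dd i : ℝ) : ℂ) * Complex.exp ((γ i : ℝ) * Complex.I) := by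
    intro i
    have hbase := Complex.norm_mul_exp_arg_mul_I (q i)
    rw [habsq i] at hbase
    rw [hγ_eq]
    split_ifs with h
    · have hexp : Complex.exp ((((q i).arg + 2*Real.pi : ℝ) : ℂ) * Complex.I)
          = Complex.exp (((q i).arg : ℂ) * Complex.I) := by
        push_cast
        rw [add_mul, Complex.exp_add]
        rw [show ((2:ℂ) * (Real.pi:ℂ) * Complex.I) = 2 * Real.pi * Complex.I from rfl,
          Complex.exp_two_pi_mul_I, mul_one]
      rw [hexp]
      exact hbase.symm
    · exact hbase.symm
  -- z is far from every rim node
  have hzfar : ∀ i, r < ‖(r:ℂ) - q i‖ := by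
    intro i
    by_contra hle
    push_neg at hle
    have h1 := near_lemma r d hr hd0 hdr (q i) (by rw [habsq i]; exact hddr i) hle
    rw [← hFu, hq_eq] at h1
    rw [hFdist u (w i)] at h1
    exact absurd h1 (not_le.2 (hcon i))
  -- windows
  have hwin : ∀ i, α i < γ i ∧ γ i < 2*Real.pi - α i := by
    intro i
    have hfar := hzfar i
    have hrw : ((r:ℂ) - q i)
        = (r:ℂ) * Complex.exp (((0:ℝ):ℂ) * Complex.I) - ((dd i : ℝ):ℂ) * Complex.exp ((γ i : ℝ) * Complex.I) := by
      rw [← hqpolar i]; push_cast; simp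
    rw [hrw] at hfar
    have hsq := absSq_polar r (dd i) 0 (γ i)
    have h2 : r^2 < r^2 + (dd i)^2 - 2*r*(dd i)*Real.cos (0 - γ i) := by
      nlinarith [norm_nonneg
        ((r:ℂ) * Complex.exp (((0:ℝ):ℂ) * Complex.I) - ((dd i : ℝ):ℂ) * Complex.exp ((γ i : ℝ) * Complex.I))]
    rw [zero_sub, Real.cos_neg] at h2
    have hcos : Real.cos (γ i) < Real.cos (α i) := by
      rw [hαcos i, lt_div_iff₀ h2r]
      nlinarith [hdd0 i]
    exact cos_window (γ i) (α i) (hγmem i).1 (hγmem i).2 (hα0 i) (hα1 i) hcos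
  -- generic step : circle point at lifted angle ξ within distance r of rim j
  have step : ∀ (ξ : ℝ) (j : ZMod m),
      ‖(r:ℂ) * Complex.exp ((ξ:ℝ) * Complex.I) - q j‖ ≤ r →
      Real.cos (α j) ≤ Real.cos (ξ - γ j) := by
    intro ξ j hle
    rw [hqpolar j] at hle
    have hsq := absSq_polar r (dd j) ξ (γ j)
    have h2 : r^2 + (dd j)^2 - 2*r*(dd j)*Real.cos (ξ - γ j) ≤ r^2 := by
      rw [← hsq]
      nlinarith [norm_nonneg
        ((r:ℂ) * Complex.exp ((ξ:ℝ) * Complex.I) - ((dd j : ℝ):ℂ) * Complex.exp ((γ j : ℝ) * Complex.I))]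
    rw [hαcos j, div_le_iff₀ h2r]
    nlinarith [hdd0 j]
  -- F of the ccw / cw points
  have hFccw : ∀ i, F (ccwPt r v (w i)) = (r:ℂ) * Complex.exp (((γ i + α i : ℝ)) * Complex.I) := by
    intro i
    have h1 := toC_ccw r v (w i)
    have h3 : F (ccwPt r v (w i))
        = F (w i) * (⟨1/2, Real.sqrt (r^2 - (dd i/2)^2) / dd i⟩ : ℂ) := by
      rw [hF_def]
      simp only
      rw [h1, hdd_eq]
      ring
    rw [h3, Tpolar (dd i) r (hdd0 i) (hddr i) hr, ← hq_eq, hqpolar i, ← hα_eq]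
    have hddne : ((dd i : ℝ):ℂ) ≠ 0 := by
      exact_mod_cast (hdd0 i).ne'
    push_cast [Complex.exp_add, add_mul]
    field_simp
  have hFcw : ∀ i, F (cwPt r v (w i)) = (r:ℂ) * Complex.exp (((γ i - α i : ℝ)) * Complex.I) := by
    intro i
    have h1 := toC_cw r v (w i)
    have h3 : F (cwPt r v (w i))
        = F (w i) * (⟨1/2, -(Real.sqrt (r^2 - (dd i/2)^2) / dd i)⟩ : ℂ) := by
      rw [hF_def]
      simp only
      rw [h1, hdd_eq]
      ring
    rw [h3, Tpolar_neg (dd i) r (hdd0 i) (hddr i) hr, ← hq_eq, hqpolar i, ← hα_eq]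
    have hddne : ((dd i : ℝ):ℂ) ≠ 0 := by
      exact_mod_cast (hdd0 i).ne'
    push_cast [Complex.exp_add, sub_mul, add_mul, neg_mul]
    rw [Complex.exp_sub]
    field_simp
    have hee : Complex.exp (-(((α i : ℝ):ℂ) * Complex.I)) * Complex.exp (((α i : ℝ):ℂ) * Complex.I) = 1 := by
      rw [← Complex.exp_add]
      simp
    have hee' : Complex.exp (-(Complex.I * ((α i : ℝ):ℂ))) * Complex.exp (Complex.I * ((α i : ℝ):ℂ)) = 1 := by
      rw [← Complex.exp_add]
      simp
    linear_combination (r:ℂ) * hee'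
  -- monotonicity of the arc endpoints
  have hA : ∀ i, γ i + α i ≤ γ (i+1) + α (i+1) := by
    intro i
    have hmem := (hwheel i).1
    rw [Zd, Metric.mem_closedBall] at hmem
    have hdle : ‖(r:ℂ) * Complex.exp (((γ i + α i : ℝ)) * Complex.I) - q (i+1)‖ ≤ r := by
      rw [← hFccw i, hq_eq, hFdist]
      exact hmem
    have hc := step (γ i + α i) (i+1) hdle
    have hn := cos_narrow ((γ i + α i) - γ (i+1)) (α (i+1)) (hα0 (i+1)) (hα1 (i+1))
      (by have h1 := hwin i; have h2 := hwin (i+1); have h3 := hα0 i; linarith)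
      (by have h1 := hwin i; have h2 := hwin (i+1); have h3 := hα0 i; linarith)
      hc
    linarith [hn.2]
  have hB : ∀ i, γ i - α i ≤ γ (i+1) - α (i+1) := by
    intro i
    have hmem := (hwheel (i+1)).2
    rw [add_sub_cancel_right] at hmem
    rw [Zd, Metric.mem_closedBall] at hmem
    have hdle : ‖(r:ℂ) * Complex.exp (((γ (i+1) - α (i+1) : ℝ)) * Complex.I) - q i‖ ≤ r := by
      rw [← hFcw (i+1), hq_eq, hFdist]
      exact hmem
    have hc := step (γ (i+1) - α (i+1)) i hdle
    have hn := cos_narrow ((γ (i+1) - α (i+1)) - γ i) (α i) (hα0 i) (hα1 i)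
      (by have h1 := hwin i; have h2 := hwin (i+1); have h3 := hα0 (i+1); linarith)
      (by have h1 := hwin i; have h2 := hwin (i+1); have h3 := hα0 (i+1); linarith)
      hc
    linarith [hn.1]
  -- conclude : all arcs are equal, contradicting injectivity
  have hAeq := zmod_cyclic_mono hm (fun i => γ i + α i) hA 0
  have hBeq := zmod_cyclic_mono hm (fun i => γ i - α i) hB 0
  simp only [zero_add] at hAeq hBeq
  have hγ01 : γ 0 = γ 1 := by linarith
  have hα01 : α 0 = α 1 := by linarith
  have hdd01 : dd 0 = dd 1 := by
    have h1 := hαcos 0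
    have h2 := hαcos 1
    rw [hα01, h2] at h1
    field_simp at h1
    linarith
  have hq01 : q 0 = q 1 := by rw [hqpolar 0, hqpolar 1, hdd01, hγ01]
  have hw01 : w 0 = w 1 := by
    have hdist : dist (w 0) (w 1) = 0 := by
      rw [← hFdist (w 0) (w 1), ← hq_eq, ← hq_eq, hq01]
      simp
    exact dist_eq_zero.1 hdist
  have h01 : (0 : ZMod m) = 1 := hinj hw01
  haveI : NeZero m := ⟨by omega⟩
  haveI : Fact (1 < m) := ⟨by omega⟩
  have hval := congrArg ZMod.val h01
  rw [ZMod.val_zero, ZMod.val_one] at hval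
  exact absurd hval (by omega)
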